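/- In OF_n with E = {f_{X,X} : X ⊆ [n-1]}, the generalized Green's relations coincide with the classical ones: ~L = L and ~R = R. Moreover (f_{X,Y})* = f_{X,X} and (f_{X,Y})^+ = f_{Y,Y}, so OF_n is a reduced E-Fountain semigroup satisfying the congruence condition. -/

import Mathlib

/-- The order-preserving map `f_{X,Y} : [n+1] → [n+1]` (with top element
`Fin.last n` playing the role of `n+1`, and `X, Y ⊆ [n]` via `Fin.castSucc`)
determined by equal-size subsets `X, Y`: it sends the interval
`(x_{i-1}, x_i]` to `y_i` and everything above `x_l` to the top. -/
def fXY (n : ℕ) (X Y : Finset (Fin n)) (_h : X.card = Y.card) :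
    Fin (n + 1) → Fin (n + 1) := fun x =>
  if hk : (X.filter fun t => t.castSucc < x).card < Y.card then
    (Y.orderEmbOfFin rfl ⟨_, hk⟩).castSucc
  else Fin.last n

theorem fXY_monotone (n : ℕ) (X Y : Finset (Fin n)) (h : X.card = Y.card) :
    Monotone (fXY n X Y h) := by
  intro a b hab
  unfold fXY
  have hle : (X.filter fun t => t.castSucc < a).card ≤
      (X.filter fun t => t.castSucc < b).card :=
    Finset.card_le_card (Finset.monotone_filter_right X
      (fun t _ ht => lt_of_lt_of_le ht hab))
  by_cases ha : (X.filter fun t => t.castSucc < a).card < Y.card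
  · by_cases hb : (X.filter fun t => t.castSucc < b).card < Y.card
    · rw [dif_pos ha, dif_pos hb]
      exact Fin.castSucc_le_castSucc_iff.mpr
        ((Y.orderEmbOfFin rfl).monotone (by exact hle))
    · rw [dif_pos ha, dif_neg hb]; exact Fin.le_last _
  · have hb : ¬(X.filter fun t => t.castSucc < b).card < Y.card := by omega
    rw [dif_neg ha, dif_neg hb]

theorem fXY_last (n : ℕ) (X Y : Finset (Fin n)) (h : X.card = Y.card) :
    fXY n X Y h (Fin.last n) = Fin.last n := by
  unfold fXY
  rw [Finset.filter_true_of_mem (fun t _ => Fin.castSucc_lt_last t), h,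
    dif_neg (lt_irrefl _)]

/-- The monoid `OF_{n+1}` of order-preserving self-maps of `[n+1]` fixing the
top element, as a submonoid of `Function.End (Fin (n+1))`. -/
def OFmon (n : ℕ) : Submonoid (Function.End (Fin (n + 1))) where
  carrier := {f | Monotone f ∧ f (Fin.last n) = Fin.last n}
  mul_mem' := by
    rintro f g ⟨hf1, hf2⟩ ⟨hg1, hg2⟩
    refine ⟨hf1.comp hg1, ?_⟩
    show f (g (Fin.last n)) = Fin.last n
    rw [hg2, hf2]
  one_mem' := ⟨monotone_id, rfl⟩

/-- `f_{X,Y}` as an element of the monoid `OF_{n+1}`. -/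
def FXY (n : ℕ) (X Y : Finset (Fin n)) (h : X.card = Y.card) : OFmon n :=
  ⟨fXY n X Y h, fXY_monotone n X Y h, fXY_last n X Y h⟩

/-- Green's `R`-equivalence on a monoid. -/
def RRel {M : Type*} [Monoid M] (a b : M) : Prop :=
  (∃ u, a * u = b) ∧ ∃ u, b * u = a

/-- Green's `L`-equivalence on a monoid. -/
def LRel {M : Type*} [Monoid M] (a b : M) : Prop :=
  (∃ u, u * a = b) ∧ ∃ u, u * b = a

/-- Green's `J`-equivalence on a monoid. -/
def JRel {M : Type*} [Monoid M] (a b : M) : Prop :=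
  (∃ u v, u * a * v = b) ∧ ∃ u v, u * b * v = a

/-- The distinguished set of idempotents `E = {f_{X,X} : X ⊆ [n]}` of
`OF_{n+1}` (the idempotents of the Catalan submonoid). -/
def Eset (n : ℕ) : Set (OFmon n) := Set.range fun X : Finset (Fin n) => FXY n X X rfl

/-- The generalized Green relation `~L` relative to `E`. -/
def tL (n : ℕ) (a b : OFmon n) : Prop := ∀ e ∈ Eset n, (a * e = a ↔ b * e = b)

/-- The generalized Green relation `~R` relative to `E`. -/
def tR (n : ℕ) (a b : OFmon n) : Prop := ∀ e ∈ Eset n, (e * a = a ↔ e * b = b)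

namespace OFhelp

variable {n : ℕ}

/-- number of elements of `X` strictly below `x`. -/
def cnt (X : Finset (Fin n)) (x : Fin (n + 1)) : ℕ :=
  (X.filter fun t => t.castSucc < x).card

lemma cnt_mono (X : Finset (Fin n)) : Monotone (cnt X) := fun a b hab =>
  Finset.card_le_card (Finset.monotone_filter_right X
    (fun t _ ht => lt_of_lt_of_le ht hab))

def go (Y : Finset (Fin n)) (k : ℕ) : Fin (n + 1) :=
  if hk : k < Y.card then (Y.orderEmbOfFin rfl ⟨k, hk⟩).castSucc else Fin.last n

lemma fXY_eq (X Y : Finset (Fin n)) (h : X.card = Y.card) (x : Fin (n + 1)) :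
    fXY n X Y h x = go Y (cnt X x) := rfl

lemma exists_emb_eq {X : Finset (Fin n)} {t : Fin n} (ht : t ∈ X) :
    ∃ j : Fin X.card, X.orderEmbOfFin rfl j = t := by
  have : t ∈ Set.range (X.orderEmbOfFin rfl) := by
    rw [Finset.range_orderEmbOfFin]; exact ht
  exact this

lemma cnt_emb (X : Finset (Fin n)) (j : Fin X.card) :
    cnt X ((X.orderEmbOfFin rfl j).castSucc) = j := by
  have himg : X.filter (fun t => t.castSucc < (X.orderEmbOfFin rfl j).castSucc)
      = (Finset.univ.filter fun i : Fin X.card => i < j).image (X.orderEmbOfFin rfl) := by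
    ext t
    simp only [Finset.mem_filter, Finset.mem_image, Finset.mem_univ, true_and,
      Fin.castSucc_lt_castSucc_iff]
    constructor
    · rintro ⟨ht, hlt⟩
      obtain ⟨i, rfl⟩ := exists_emb_eq ht
      exact ⟨i, (X.orderEmbOfFin rfl).lt_iff_lt.mp hlt, rfl⟩
    · rintro ⟨i, hij, rfl⟩
      exact ⟨Finset.orderEmbOfFin_mem _ _ _, (X.orderEmbOfFin rfl).lt_iff_lt.mpr hij⟩
  rw [cnt, himg, Finset.card_image_of_injective _ (X.orderEmbOfFin rfl).injective]
  have : (Finset.univ.filter fun i : Fin X.card => i < j) = Finset.Iio j := by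
    ext i; simp
  rw [this, Fin.card_Iio]

lemma cnt_succ_of_mem {X : Finset (Fin n)} {t : Fin n} (ht : t ∈ X) :
    cnt X t.succ = cnt X t.castSucc + 1 := by
  unfold cnt
  have h1 : X.filter (fun s => s.castSucc < t.succ) = X.filter (fun s => s ≤ t) := by
    apply Finset.filter_congr; intro s _; simp [Fin.castSucc_lt_succ_iff]
  have h2 : X.filter (fun s => s.castSucc < t.castSucc) = X.filter (fun s => s < t) := by
    apply Finset.filter_congr; intro s _; simp [Fin.castSucc_lt_castSucc_iff]
  have h3 : X.filter (fun s => s ≤ t) = insert t (X.filter (fun s => s < t)) := by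
    ext s
    simp only [Finset.mem_filter, Finset.mem_insert]
    constructor
    · rintro ⟨hs, hle⟩
      rcases eq_or_lt_of_le hle with h | h
      · exact Or.inl h
      · exact Or.inr ⟨hs, h⟩
    · rintro (rfl | ⟨hs, hlt⟩)
      · exact ⟨ht, le_refl _⟩
      · exact ⟨hs, le_of_lt hlt⟩
  rw [h1, h2, h3, Finset.card_insert_of_notMem (by simp)]

lemma cnt_succ_of_not_mem {X : Finset (Fin n)} {t : Fin n} (ht : t ∉ X) :
    cnt X t.succ = cnt X t.castSucc := by
  unfold cnt
  congr 1
  ext s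
  simp only [Finset.mem_filter, Fin.castSucc_lt_succ_iff, Fin.castSucc_lt_castSucc_iff,
    and_congr_right_iff]
  intro hs
  constructor
  · intro hle
    rcases eq_or_lt_of_le hle with h | h
    · exact absurd (h ▸ hs) ht
    · exact h
  · exact le_of_lt

lemma fXY_congr_cnt {X Y : Finset (Fin n)} (h : X.card = Y.card) {x x' : Fin (n + 1)}
    (hc : cnt X x = cnt X x') : fXY n X Y h x = fXY n X Y h x' := by
  rw [fXY_eq, fXY_eq, hc]

lemma cnt_lt_of_mem {X : Finset (Fin n)} {t : Fin n} (ht : t ∈ X) :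
    cnt X t.castSucc < X.card := by
  obtain ⟨j, rfl⟩ := exists_emb_eq ht
  rw [cnt_emb]; exact j.isLt

lemma fXX_fix_of_mem (X : Finset (Fin n)) {t : Fin n} (ht : t ∈ X) :
    fXY n X X rfl t.castSucc = t.castSucc := by
  obtain ⟨j, rfl⟩ := exists_emb_eq ht
  rw [fXY_eq, go, dif_pos (by rw [cnt_emb]; exact j.isLt)]
  congr 2
  exact Fin.ext (cnt_emb X j)

lemma le_fXX (X : Finset (Fin n)) (x : Fin (n + 1)) : x ≤ fXY n X X rfl x := by
  rw [fXY_eq, go]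
  by_cases hk : cnt X x < X.card
  · rw [dif_pos hk]
    by_contra hlt
    push_neg at hlt
    have hsucc : (X.orderEmbOfFin rfl ⟨cnt X x, hk⟩).succ ≤ x :=
      Fin.castSucc_lt_iff_succ_le.mp hlt
    have h1 : cnt X ((X.orderEmbOfFin rfl ⟨cnt X x, hk⟩).succ) ≤ cnt X x := cnt_mono X hsucc
    rw [cnt_succ_of_mem (Finset.orderEmbOfFin_mem _ _ _), cnt_emb] at h1
    have h2 : cnt X x + 1 ≤ cnt X x := by simpa using h1
    omega
  · rw [dif_neg hk]; exact Fin.le_last x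

lemma fXY_range (X Y : Finset (Fin n)) (h : X.card = Y.card) (x : Fin (n + 1)) :
    fXY n X Y h x = Fin.last n ∨ ∃ t ∈ Y, fXY n X Y h x = t.castSucc := by
  rw [fXY_eq, go]
  by_cases hk : cnt X x < Y.card
  · rw [dif_pos hk]
    exact Or.inr ⟨_, Finset.orderEmbOfFin_mem _ _ _, rfl⟩
  · rw [dif_neg hk]; exact Or.inl rfl

lemma fXX_fix_iff (X : Finset (Fin n)) (x : Fin (n + 1)) :
    fXY n X X rfl x = x ↔ (x = Fin.last n ∨ ∃ t ∈ X, x = t.castSucc) := by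
  constructor
  · intro hx
    rcases fXY_range X X rfl x with h | ⟨t, ht, het⟩
    · exact Or.inl (hx ▸ h)
    · exact Or.inr ⟨t, ht, hx ▸ het⟩
  · rintro (rfl | ⟨t, ht, rfl⟩)
    · exact fXY_last n X X rfl
    · exact fXX_fix_of_mem X ht

end OFhelp
namespace OFhelp

variable {n : ℕ}

lemma mul_apply (a b : OFmon n) (x : Fin (n + 1)) : (↑(a * b) : Function.End (Fin (n+1))) x = a.1 (b.1 x) := rfl

lemma OF_ext_iff {a b : OFmon n} : a = b ↔ ∀ x, a.1 x = b.1 x := by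
  constructor
  · rintro rfl _; rfl
  · intro h; exact Subtype.ext (funext h)

lemma FXY_apply (X Y : Finset (Fin n)) (h : X.card = Y.card) (x : Fin (n + 1)) :
    (FXY n X Y h).1 x = fXY n X Y h x := rfl

/-- the "jump set" of `a`. -/
def Jset (a : OFmon n) : Finset (Fin n) :=
  Finset.univ.filter fun t => a.1 t.castSucc ≠ a.1 t.succ

open Classical in
/-- the "image set" of `a`. -/
noncomputable def Iset (a : OFmon n) : Finset (Fin n) :=
  Finset.univ.filter fun t => ∃ x, a.1 x = t.castSucc

lemma mem_Jset {a : OFmon n} {t : Fin n} : t ∈ Jset a ↔ a.1 t.castSucc ≠ a.1 t.succ := by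
  simp [Jset]

lemma mem_Iset {a : OFmon n} {t : Fin n} : t ∈ Iset a ↔ ∃ x, a.1 x = t.castSucc := by
  simp [Iset]

lemma a_mono (a : OFmon n) : Monotone a.1 := a.2.1

lemma a_last (a : OFmon n) : a.1 (Fin.last n) = Fin.last n := a.2.2

/-- `a * f_{X,X} = a ↔ Jset a ⊆ X`. -/
lemma mulE_iff (a : OFmon n) (X : Finset (Fin n)) :
    a * FXY n X X rfl = a ↔ Jset a ⊆ X := by
  constructor
  · intro hmul t htJ
    rw [mem_Jset] at htJ
    by_contra htX
    apply htJ
    have h1 : ∀ x, a.1 (fXY n X X rfl x) = a.1 x := fun x =>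
      congrFun (congrArg Subtype.val hmul) x
    have h2 : fXY n X X rfl t.castSucc = fXY n X X rfl t.succ :=
      fXY_congr_cnt rfl (cnt_succ_of_not_mem htX).symm
    rw [← h1 t.castSucc, ← h1 t.succ, h2]
  · intro hJ
    rw [OF_ext_iff]
    intro x
    rw [mul_apply, FXY_apply]
    -- strong induction on (f x).val - x.val
    suffices H : ∀ m (x : Fin (n + 1)), (fXY n X X rfl x).val - x.val ≤ m →
        a.1 (fXY n X X rfl x) = a.1 x by
      exact H n x (by omega)
    intro m
    induction m with
    | zero =>
      intro x hx
      have hle := le_fXX X x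
      have : fXY n X X rfl x = x := by
        apply le_antisymm _ hle
        rw [Fin.le_def]; omega
      rw [this]
    | succ m ih =>
      intro x hx
      rcases eq_or_lt_of_le (le_fXX X x) with heq | hlt
      · rw [← heq]
      · have hxlast : x ≠ Fin.last n := by
          intro hx'
          rw [hx', fXY_last] at hlt
          exact lt_irrefl _ hlt
        obtain ⟨t, rfl⟩ := Fin.exists_castSucc_eq.mpr hxlast
        have htX : t ∉ X := by
          intro htX
          rw [fXX_fix_of_mem X htX] at hlt
          exact lt_irrefl _ hlt
        have hjump : a.1 t.castSucc = a.1 t.succ := by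
          by_contra hne
          exact htX (hJ (mem_Jset.mpr hne))
        have hcc : fXY n X X rfl t.succ = fXY n X X rfl t.castSucc :=
          fXY_congr_cnt rfl (cnt_succ_of_not_mem htX)
        have hrec : a.1 (fXY n X X rfl t.succ) = a.1 t.succ := by
          apply ih
          rw [hcc]
          have h1 : t.castSucc.val < (fXY n X X rfl t.castSucc).val := hlt
          have h2 : t.succ.val = t.castSucc.val + 1 := rfl
          omega
        rw [← hcc, hrec, hjump]

/-- `f_{X,X} * a = a ↔ Iset a ⊆ X`. -/
lemma Emul_iff (a : OFmon n) (X : Finset (Fin n)) :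
    FXY n X X rfl * a = a ↔ Iset a ⊆ X := by
  constructor
  · intro hmul t htI
    obtain ⟨x, hx⟩ := mem_Iset.mp htI
    have h1 : fXY n X X rfl (a.1 x) = a.1 x :=
      congrFun (congrArg Subtype.val hmul) x
    rcases (fXX_fix_iff X (a.1 x)).mp h1 with h | ⟨t', ht', h⟩
    · exact absurd (hx ▸ h) (Fin.castSucc_lt_last t).ne
    · have : t = t' := Fin.castSucc_injective n (hx ▸ h)
      exact this ▸ ht'
  · intro hI
    rw [OF_ext_iff]
    intro x
    rw [mul_apply, FXY_apply]
    rcases eq_or_ne (a.1 x) (Fin.last n) with h | h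
    · rw [h, fXY_last]
    · obtain ⟨t, ht⟩ := Fin.exists_castSucc_eq.mpr h
      have : t ∈ Iset a := mem_Iset.mpr ⟨x, ht.symm⟩
      rw [← ht]
      exact fXX_fix_of_mem X (hI this)

lemma Jset_FXY (X Y : Finset (Fin n)) (h : X.card = Y.card) :
    Jset (FXY n X Y h) = X := by
  ext t
  rw [mem_Jset, FXY_apply, FXY_apply]
  constructor
  · intro hne
    by_contra htX
    exact hne (fXY_congr_cnt h (cnt_succ_of_not_mem htX).symm)
  · intro htX
    have hk : cnt X t.castSucc < Y.card := h ▸ cnt_lt_of_mem htX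
    have hstep := cnt_succ_of_mem htX
    rw [fXY_eq, fXY_eq, go, go, dif_pos hk, hstep]
    by_cases hk2 : cnt X t.castSucc + 1 < Y.card
    · rw [dif_pos hk2]
      intro heq
      have := (Y.orderEmbOfFin rfl).injective (Fin.castSucc_injective n heq)
      simp [Fin.ext_iff] at this
    · rw [dif_neg hk2]
      exact (Fin.castSucc_lt_last _).ne
  
lemma Iset_FXY (X Y : Finset (Fin n)) (h : X.card = Y.card) :
    Iset (FXY n X Y h) = Y := by
  ext t
  rw [mem_Iset]
  constructor
  · rintro ⟨x, hx⟩
    rw [FXY_apply] at hx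
    rcases fXY_range X Y h x with h' | ⟨t', ht', h'⟩
    · exact absurd (hx.symm.trans h') (Fin.castSucc_lt_last t).ne
    · have : t = t' := Fin.castSucc_injective n (hx.symm.trans h')
      exact this ▸ ht'
  · intro htY
    obtain ⟨j, rfl⟩ := exists_emb_eq htY
    have hjX : (j : ℕ) < X.card := by rw [h]; exact j.isLt
    refine ⟨(X.orderEmbOfFin rfl ⟨j, hjX⟩).castSucc, ?_⟩
    rw [FXY_apply, fXY_eq, go, cnt_emb, dif_pos (by simpa using j.isLt)]

end OFhelp
namespace OFhelp

variable {n : ℕ}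

lemma tL_iff_Jset (a b : OFmon n) : tL n a b ↔ Jset a = Jset b := by
  constructor
  · intro h
    apply Finset.Subset.antisymm
    · have := (h (FXY n (Jset b) (Jset b) rfl) ⟨Jset b, rfl⟩).mpr
        ((mulE_iff b (Jset b)).mpr (Finset.Subset.refl _))
      exact (mulE_iff a (Jset b)).mp this
    · have := (h (FXY n (Jset a) (Jset a) rfl) ⟨Jset a, rfl⟩).mp
        ((mulE_iff a (Jset a)).mpr (Finset.Subset.refl _))
      exact (mulE_iff b (Jset a)).mp this
  · rintro hJ e ⟨X, rfl⟩
    rw [mulE_iff, mulE_iff, hJ]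

lemma tR_iff_Iset (a b : OFmon n) : tR n a b ↔ Iset a = Iset b := by
  constructor
  · intro h
    apply Finset.Subset.antisymm
    · have := (h (FXY n (Iset b) (Iset b) rfl) ⟨Iset b, rfl⟩).mpr
        ((Emul_iff b (Iset b)).mpr (Finset.Subset.refl _))
      exact (Emul_iff a (Iset b)).mp this
    · have := (h (FXY n (Iset a) (Iset a) rfl) ⟨Iset a, rfl⟩).mp
        ((Emul_iff a (Iset a)).mpr (Finset.Subset.refl _))
      exact (Emul_iff b (Iset a)).mp this
  · rintro hI e ⟨X, rfl⟩
    rw [Emul_iff, Emul_iff, hI]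

lemma const_of_nojump (b : OFmon n) :
    ∀ (x y : Fin (n + 1)), x ≤ y →
    (∀ t : Fin n, x ≤ t.castSucc → t.succ ≤ y → b.1 t.castSucc = b.1 t.succ) →
    b.1 x = b.1 y := by
  suffices H : ∀ m (x y : Fin (n + 1)), y.val - x.val ≤ m → x ≤ y →
      (∀ t : Fin n, x ≤ t.castSucc → t.succ ≤ y → b.1 t.castSucc = b.1 t.succ) →
      b.1 x = b.1 y by
    intro x y hxy h; exact H n x y (by omega) hxy h
  intro m
  induction m with
  | zero =>
    intro x y hm hxy _
    have : x = y := by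
      apply le_antisymm hxy
      rw [Fin.le_def]; omega
    rw [this]
  | succ m ih =>
    intro x y hm hxy hnj
    rcases eq_or_lt_of_le hxy with heq | hlt
    · rw [heq]
    · have hxlast : x ≠ Fin.last n := by
        intro hx'
        exact absurd (hx' ▸ hlt) (Fin.le_last y).not_gt
      obtain ⟨t, rfl⟩ := Fin.exists_castSucc_eq.mpr hxlast
      have hsy : t.succ ≤ y := Fin.castSucc_lt_iff_succ_le.mp hlt
      have h1 : b.1 t.castSucc = b.1 t.succ := hnj t (le_refl _) hsy
      have h2 : b.1 t.succ = b.1 y := by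
        apply ih t.succ y
        · have : t.succ.val = t.castSucc.val + 1 := rfl
          omega
        · exact hsy
        · intro t' h1' h2'
          exact hnj t' (le_trans (le_of_lt (Fin.castSucc_lt_succ (i := t))) h1') h2'
      rw [h1, h2]

lemma ker_of_Jset {a b : OFmon n} (hJ : Jset a = Jset b) :
    ∀ x y, a.1 x = a.1 y → b.1 x = b.1 y := by
  have key : ∀ x y, x ≤ y → a.1 x = a.1 y → b.1 x = b.1 y := by
    intro x y hxy hker
    apply const_of_nojump b x y hxy
    intro t h1 h2
    by_contra hne
    have htb : t ∈ Jset b := mem_Jset.mpr hne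
    rw [← hJ, mem_Jset] at htb
    apply htb
    apply le_antisymm (a_mono a (le_of_lt (Fin.castSucc_lt_succ (i := t))))
    calc a.1 t.succ ≤ a.1 y := a_mono a h2
      _ = a.1 x := hker.symm
      _ ≤ a.1 t.castSucc := a_mono a h1
  intro x y hker
  rcases le_total x y with h | h
  · exact key x y h hker
  · exact (key y x h hker.symm).symm

lemma exists_left_mul {a b : OFmon n}
    (hk : ∀ x y, a.1 x = a.1 y → b.1 x = b.1 y) : ∃ u : OFmon n, u * a = b := by
  have hne : ∀ y : Fin (n + 1), (Finset.univ.filter fun x => y ≤ a.1 x).Nonempty :=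
    fun y => ⟨Fin.last n, by simp [a_last a, Fin.le_last]⟩
  set m : Fin (n + 1) → Fin (n + 1) :=
    fun y => (Finset.univ.filter fun x => y ≤ a.1 x).min' (hne y) with hm
  have hmem : ∀ y, y ≤ a.1 (m y) := by
    intro y
    have := Finset.min'_mem _ (hne y)
    simpa using this
  have hmin : ∀ y x, y ≤ a.1 x → m y ≤ x := by
    intro y x hx
    exact Finset.min'_le _ _ (by simpa using hx)
  have hmmono : Monotone m := by
    intro y y' hy
    exact hmin y (m y') (le_trans hy (hmem y'))
  have hma : ∀ x, a.1 (m (a.1 x)) = a.1 x := by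
    intro x
    exact le_antisymm (a_mono a (hmin (a.1 x) x (le_refl _))) (hmem (a.1 x))
  refine ⟨⟨fun y => b.1 (m y), ?_, ?_⟩, ?_⟩
  · exact fun y y' hy => a_mono b (hmmono hy)
  · show b.1 (m (Fin.last n)) = Fin.last n
    have : a.1 (m (Fin.last n)) = a.1 (Fin.last n) := by
      rw [a_last a]
      exact le_antisymm (Fin.le_last _) (hmem (Fin.last n))
    rw [hk _ _ this, a_last b]
  · rw [OF_ext_iff]
    intro x
    rw [mul_apply]
    exact hk _ _ (hma x)

lemma exists_right_mul {a b : OFmon n}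
    (hr : ∀ x, ∃ z, b.1 z = a.1 x) : ∃ u : OFmon n, b * u = a := by
  have hne : ∀ x : Fin (n + 1), (Finset.univ.filter fun z => b.1 z ≤ a.1 x).Nonempty := by
    intro x
    obtain ⟨z, hz⟩ := hr x
    exact ⟨z, by simp [hz]⟩
  set u : Fin (n + 1) → Fin (n + 1) :=
    fun x => (Finset.univ.filter fun z => b.1 z ≤ a.1 x).max' (hne x) with hu
  have hmem : ∀ x, b.1 (u x) ≤ a.1 x := by
    intro x
    have := Finset.max'_mem _ (hne x)
    simpa using this
  have hmax : ∀ x z, b.1 z ≤ a.1 x → z ≤ u x := by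
    intro x z hz
    exact Finset.le_max' _ _ (by simpa using hz)
  have humono : Monotone u := by
    intro x x' hx
    exact hmax x' (u x) (le_trans (hmem x) (a_mono a hx))
  have hbu : ∀ x, b.1 (u x) = a.1 x := by
    intro x
    obtain ⟨z, hz⟩ := hr x
    exact le_antisymm (hmem x) (hz ▸ a_mono b (hmax x z (le_of_eq hz)))
  refine ⟨⟨u, humono, ?_⟩, ?_⟩
  · show u (Fin.last n) = Fin.last n
    apply le_antisymm (Fin.le_last _)
    apply hmax
    rw [a_last a, b.2.2]
  · rw [OF_ext_iff]
    intro x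
    rw [mul_apply]
    exact hbu x

lemma LRel_iff_Jset (a b : OFmon n) : LRel a b ↔ Jset a = Jset b := by
  constructor
  · rintro ⟨⟨u, hu⟩, ⟨v, hv⟩⟩
    apply Finset.Subset.antisymm
    · intro t ht
      rw [mem_Jset] at ht ⊢
      intro heq
      apply ht
      rw [← hv]
      rw [mul_apply, mul_apply, heq]
    · intro t ht
      rw [mem_Jset] at ht ⊢
      intro heq
      apply ht
      rw [← hu]
      rw [mul_apply, mul_apply, heq]
  · intro hJ
    exact ⟨exists_left_mul (ker_of_Jset hJ), exists_left_mul (ker_of_Jset hJ.symm)⟩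

lemma RRel_iff_Iset (a b : OFmon n) : RRel a b ↔ Iset a = Iset b := by
  constructor
  · rintro ⟨⟨u, hu⟩, ⟨v, hv⟩⟩
    apply Finset.Subset.antisymm
    · intro t ht
      rw [mem_Iset] at ht ⊢
      obtain ⟨x, hx⟩ := ht
      exact ⟨v.1 x, by rw [show b.1 (v.1 x) = (b * v).1 x from rfl, hv, hx]⟩
    · intro t ht
      rw [mem_Iset] at ht ⊢
      obtain ⟨x, hx⟩ := ht
      exact ⟨u.1 x, by rw [show a.1 (u.1 x) = (a * u).1 x from rfl, hu, hx]⟩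
  · intro hI
    have key : ∀ (c d : OFmon n), Iset c = Iset d → ∀ x, ∃ z, d.1 z = c.1 x := by
      intro c d hcd x
      rcases eq_or_ne (c.1 x) (Fin.last n) with h | h
      · exact ⟨Fin.last n, by rw [a_last d, h]⟩
      · obtain ⟨t, ht⟩ := Fin.exists_castSucc_eq.mpr h
        have : t ∈ Iset d := hcd ▸ mem_Iset.mpr ⟨x, ht.symm⟩
        obtain ⟨z, hz⟩ := mem_Iset.mp this
        exact ⟨z, by rw [hz, ht]⟩
    exact ⟨exists_right_mul (key b a hI.symm), exists_right_mul (key a b hI)⟩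

end OFhelp
open OFhelp

/-- In `OF_{n+1}` with `E = {f_{X,X}}`: the generalized Green relations
coincide with the classical ones (`~L = L`, `~R = R`), with
`(f_{X,Y})* = f_{X,X}` and `(f_{X,Y})⁺ = f_{Y,Y}`; moreover `OF_{n+1}` is a
reduced `E`-Fountain semigroup (each class of `~L` and `~R` contains a unique
idempotent of `E`, and `ef = e ↔ fe = e` on `E`) satisfying the congruence
condition. -/
theorem statement17 (n : ℕ) :
    (∀ a b : OFmon n, tL n a b ↔ LRel a b) ∧
    (∀ a b : OFmon n, tR n a b ↔ RRel a b) ∧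
    (∀ (X Y : Finset (Fin n)) (h : X.card = Y.card),
      tL n (FXY n X Y h) (FXY n X X rfl)) ∧
    (∀ (X Y : Finset (Fin n)) (h : X.card = Y.card),
      tR n (FXY n X Y h) (FXY n Y Y rfl)) ∧
    (∀ e ∈ Eset n, e * e = e) ∧
    (∀ e ∈ Eset n, ∀ f ∈ Eset n, (e * f = e ↔ f * e = e)) ∧
    (∀ a : OFmon n, ∃! e, e ∈ Eset n ∧ tL n a e) ∧
    (∀ a : OFmon n, ∃! e, e ∈ Eset n ∧ tR n a e) ∧
    (∀ a b c : OFmon n, tL n a b → tL n (a * c) (b * c)) ∧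
    (∀ a b c : OFmon n, tR n a b → tR n (c * a) (c * b)) := by
  refine ⟨?_, ?_, ?_, ?_, ?_, ?_, ?_, ?_, ?_, ?_⟩
  · intro a b
    rw [tL_iff_Jset, LRel_iff_Jset]
  · intro a b
    rw [tR_iff_Iset, RRel_iff_Iset]
  · intro X Y h
    rw [tL_iff_Jset, Jset_FXY, Jset_FXY]
  · intro X Y h
    rw [tR_iff_Iset, Iset_FXY, Iset_FXY]
  · rintro e ⟨X, rfl⟩
    rw [mulE_iff, Jset_FXY]
  · rintro e ⟨X, rfl⟩ f ⟨Y, rfl⟩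
    rw [mulE_iff, Emul_iff, Jset_FXY, Iset_FXY]
  · intro a
    refine ⟨FXY n (Jset a) (Jset a) rfl, ⟨⟨Jset a, rfl⟩, ?_⟩, ?_⟩
    · rw [tL_iff_Jset, Jset_FXY]
    · rintro e ⟨⟨X, rfl⟩, htL⟩
      rw [tL_iff_Jset, Jset_FXY] at htL
      subst htL
      rfl
  · intro a
    refine ⟨FXY n (Iset a) (Iset a) rfl, ⟨⟨Iset a, rfl⟩, ?_⟩, ?_⟩
    · rw [tR_iff_Iset, Iset_FXY]
    · rintro e ⟨⟨X, rfl⟩, htR⟩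
      rw [tR_iff_Iset, Iset_FXY] at htR
      subst htR
      rfl
  · intro a b c h
    rw [tL_iff_Jset, ← LRel_iff_Jset] at h ⊢
    obtain ⟨⟨u, hu⟩, ⟨v, hv⟩⟩ := h
    exact ⟨⟨u, by rw [← mul_assoc, hu]⟩, ⟨v, by rw [← mul_assoc, hv]⟩⟩
  · intro a b c h
    rw [tR_iff_Iset, ← RRel_iff_Iset] at h ⊢
    obtain ⟨⟨u, hu⟩, ⟨v, hv⟩⟩ := h
    exact ⟨⟨u, by rw [mul_assoc, hu]⟩, ⟨v, by rw [mul_assoc, hv]⟩⟩
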